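/- arXiv:1810.05773 — 2 statements merged into one kernel-verified Lean document; each statement's English description precedes it below -/
import Mathlib

section
/- For H < 0, the function sn_H(r) = sinh(√(-H) r)/√(-H) satisfies: the function f(L) = (∫_L^{L+R} sn_H(r)^{n-1} dr) / sn_H(L)^{n-1} is strictly decreasing in L for L > 0, for any fixed R > 0 and n ≥ 2. -/
open MeasureTheory

lemma sinh_ratio_lt (x1 x2 t : ℝ) (h1 : 0 < x1) (h12 : x1 < x2) (ht : 0 < t) :
    Real.sinh (x2 + t) / Real.sinh x2 < Real.sinh (x1 + t) / Real.sinh x1 := by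
  have hs1 : 0 < Real.sinh x1 := Real.sinh_pos_iff.mpr h1
  have hs2 : 0 < Real.sinh x2 := Real.sinh_pos_iff.mpr (h1.trans h12)
  rw [div_lt_div_iff₀ hs2 hs1]
  have key : Real.sinh (x1 + t) * Real.sinh x2 - Real.sinh (x2 + t) * Real.sinh x1
      = Real.sinh t * Real.sinh (x2 - x1) := by
    rw [Real.sinh_add, Real.sinh_add, Real.sinh_sub]; ring
  nlinarith [Real.sinh_pos_iff.mpr ht, Real.sinh_pos_iff.mpr (sub_pos.mpr h12)]

theorem stmt0 (H R : ℝ) (hH : H < 0) (hR : 0 < R) (n : ℕ) (hn : 2 ≤ n)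
    (sn f : ℝ → ℝ)
    (hsn : ∀ r, sn r = Real.sinh (Real.sqrt (-H) * r) / Real.sqrt (-H))
    (hf : ∀ L, f L = (∫ r in L..(L + R), sn r ^ (n - 1)) / sn L ^ (n - 1)) :
    StrictAntiOn f (Set.Ioi 0) := by
  set a := Real.sqrt (-H) with ha_def
  have ha : 0 < a := Real.sqrt_pos.mpr (neg_pos.mpr hH)
  -- rewrite f as integral of ratios
  have hrepr : ∀ L, 0 < L →
      f L = ∫ s in (0:ℝ)..R, (Real.sinh (a * (L + s)) / Real.sinh (a * L)) ^ (n - 1) := by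
    intro L hL
    have hsL : 0 < Real.sinh (a * L) := Real.sinh_pos_iff.mpr (mul_pos ha hL)
    have h1 : (∫ r in L..(L + R), sn r ^ (n - 1))
        = ∫ s in (0:ℝ)..R, sn (L + s) ^ (n - 1) := by
      rw [intervalIntegral.integral_comp_add_left (fun r => sn r ^ (n - 1)) L]
      norm_num
    rw [hf L, h1, ← intervalIntegral.integral_div]
    refine intervalIntegral.integral_congr fun s _ => ?_
    have hratio : sn (L + s) / sn L = Real.sinh (a * (L + s)) / Real.sinh (a * L) := by
      rw [hsn, hsn]; field_simp
    rw [← div_pow, hratio]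
  intro L1 hL1 L2 hL2 h12
  rw [Set.mem_Ioi] at hL1 hL2
  rw [hrepr L1 hL1, hrepr L2 hL2]
  have hsL1 : 0 < Real.sinh (a * L1) := Real.sinh_pos_iff.mpr (mul_pos ha hL1)
  have hsL2 : 0 < Real.sinh (a * L2) := Real.sinh_pos_iff.mpr (mul_pos ha hL2)
  have hcont : ∀ L : ℝ, ContinuousOn
      (fun s => (Real.sinh (a * (L + s)) / Real.sinh (a * L)) ^ (n - 1)) (Set.Icc 0 R) := by
    intro L
    exact Continuous.continuousOn (by fun_prop)
  have hkey : ∀ s : ℝ, 0 < s →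
      (Real.sinh (a * (L2 + s)) / Real.sinh (a * L2)) ^ (n - 1)
        < (Real.sinh (a * (L1 + s)) / Real.sinh (a * L1)) ^ (n - 1) := by
    intro s hs
    have h := sinh_ratio_lt (a * L1) (a * L2) (a * s) (mul_pos ha hL1)
      (by nlinarith) (mul_pos ha hs)
    rw [← mul_add, ← mul_add] at h
    refine pow_lt_pow_left₀ h ?_ (by omega)
    exact div_nonneg (Real.sinh_nonneg_iff.mpr (by positivity)) hsL2.le
  refine intervalIntegral.integral_lt_integral_of_continuousOn_of_le_of_exists_lt hR
    (hcont L2) (hcont L1) (fun s hs => (hkey s hs.1).le) ?_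
  exact ⟨R, ⟨hR.le, le_refl R⟩, hkey R hR⟩
end

section
/- Let A be a measurable set in a measure space covered by finitely many measurable sets B₁,...,B_N, and let f ≥ 0 be integrable. Suppose for each i there is a subset B'_i ⊆ B_i with the B'_i pairwise disjoint, B'_i ⊆ A, and μ(B_i) ≤ Λ μ(B'_i) for a constant Λ ≥ 1. If (1/μ(B_i)) ∫_{B_i} f ≤ k^p for all i, then (1/μ(A)) ∫_A f ≤ Λ k^p. -/
open MeasureTheory

theorem stmt10 {Ω : Type*} [MeasurableSpace Ω] (μ : Measure Ω) (N : ℕ)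
    (A : Set Ω) (B B' : Fin N → Set Ω) (f : Ω → ℝ) (k p Λ : ℝ)
    (hk : 0 ≤ k) (hp : 0 < p) (hΛ : 1 ≤ Λ)
    (hAmeas : MeasurableSet A) (hBmeas : ∀ i, MeasurableSet (B i))
    (hB'meas : ∀ i, MeasurableSet (B' i))
    (hf : ∀ ω, 0 ≤ f ω) (hfint : Integrable f μ)
    (hcover : A ⊆ ⋃ i, B i)
    (hsub : ∀ i, B' i ⊆ B i) (hsubA : ∀ i, B' i ⊆ A)
    (hdisj : Pairwise fun i j => Disjoint (B' i) (B' j))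
    (hBfin : ∀ i, μ (B i) ≠ ⊤) (hBpos : ∀ i, μ (B i) ≠ 0)
    (hAfin : μ A ≠ ⊤) (hApos : μ A ≠ 0)
    (hdouble : ∀ i, μ (B i) ≤ ENNReal.ofReal Λ * μ (B' i))
    (havg : ∀ i, (1 / (μ (B i)).toReal) * ∫ ω in B i, f ω ∂μ ≤ k ^ p) :
    (1 / (μ A).toReal) * ∫ ω in A, f ω ∂μ ≤ Λ * k ^ p := by
  have hB'fin : ∀ i, μ (B' i) ≠ ⊤ := fun i =>
    ((measure_mono (hsub i)).trans_lt (lt_top_iff_ne_top.2 (hBfin i))).ne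
  have hApos' : 0 < (μ A).toReal := ENNReal.toReal_pos hApos hAfin
  have hBpos' : ∀ i, 0 < (μ (B i)).toReal := fun i => ENNReal.toReal_pos (hBpos i) (hBfin i)
  -- step 1: integral over A ≤ sum of integrals over B i
  have hle1 : ∫ ω in A, f ω ∂μ ≤ ∑ i, ∫ ω in B i, f ω ∂μ := by
    have hmle : μ.restrict A ≤ ∑ i, μ.restrict (B i) := by
      rw [← Measure.sum_fintype]
      exact le_trans (Measure.restrict_mono hcover le_rfl) Measure.restrict_iUnion_le
    have h1 : ∫ ω in A, f ω ∂μ ≤ ∫ ω, f ω ∂(∑ i, μ.restrict (B i)) :=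
      integral_mono_measure hmle (Filter.Eventually.of_forall hf)
        (integrable_finset_sum_measure.2 fun i _ => hfint.restrict)
    rwa [integral_finset_sum_measure (fun i _ => hfint.restrict)] at h1
  -- step 2: each integral ≤ k^p * μ(B i).toReal
  have hle2 : ∀ i, ∫ ω in B i, f ω ∂μ ≤ k ^ p * (μ (B i)).toReal := by
    intro i
    have := havg i
    have h := hBpos' i
    rw [one_div, inv_mul_le_iff₀ h] at this
    linarith [this]
  -- step 3: μ(B i).toReal ≤ Λ * μ(B' i).toReal
  have hle3 : ∀ i, (μ (B i)).toReal ≤ Λ * (μ (B' i)).toReal := by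
    intro i
    have := hdouble i
    have hfin : ENNReal.ofReal Λ * μ (B' i) ≠ ⊤ :=
      ENNReal.mul_ne_top ENNReal.ofReal_ne_top (hB'fin i)
    calc (μ (B i)).toReal ≤ (ENNReal.ofReal Λ * μ (B' i)).toReal :=
          ENNReal.toReal_mono hfin this
      _ = Λ * (μ (B' i)).toReal := by
          rw [ENNReal.toReal_mul, ENNReal.toReal_ofReal (by linarith)]
  -- step 4: ∑ μ(B' i).toReal ≤ μ(A).toReal
  have hle4 : ∑ i, (μ (B' i)).toReal ≤ (μ A).toReal := by
    have hsum : ∑ i, μ (B' i) = μ (⋃ i, B' i) := by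
      rw [measure_iUnion hdisj hB'meas, tsum_fintype]
    have hμle : μ (⋃ i, B' i) ≤ μ A := measure_mono (Set.iUnion_subset hsubA)
    have : (∑ i, μ (B' i)).toReal ≤ (μ A).toReal :=
      ENNReal.toReal_mono hAfin (hsum ▸ hμle)
    rwa [ENNReal.toReal_sum (fun i _ => hB'fin i)] at this
  have hkp : 0 ≤ k ^ p := Real.rpow_nonneg hk p
  have hΛ0 : (0:ℝ) ≤ Λ := by linarith
  have hfinal : ∫ ω in A, f ω ∂μ ≤ Λ * k ^ p * (μ A).toReal := by
    calc ∫ ω in A, f ω ∂μ ≤ ∑ i, ∫ ω in B i, f ω ∂μ := hle1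
      _ ≤ ∑ i, k ^ p * (μ (B i)).toReal := Finset.sum_le_sum fun i _ => hle2 i
      _ ≤ ∑ i, k ^ p * (Λ * (μ (B' i)).toReal) :=
          Finset.sum_le_sum fun i _ => mul_le_mul_of_nonneg_left (hle3 i) hkp
      _ = Λ * k ^ p * ∑ i, (μ (B' i)).toReal := by rw [Finset.mul_sum]; ring_nf
      _ ≤ Λ * k ^ p * (μ A).toReal := by
          exact mul_le_mul_of_nonneg_left hle4 (by positivity)
  rw [one_div, inv_mul_le_iff₀ hApos']
  linarith [hfinal]
end
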